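/- For the 4-dimensional Lyness map with Lie symmetry X_4 as above, the vector field X_4 annihilates the first integrals V_1 and V_2: the directional derivatives X_4(V_1) = 0 and X_4(V_2) = 0 identically on the positive orthant. Hence the level sets {V_1 = h} ∩ {V_2 = k} ∩ Q⁺ are invariant under the flow of X_4. -/

import Mathlib

set_option maxHeartbeats 4000000


/-- the Lie symmetry `X₄` of the 4-dimensional Lyness map
annihilates the first integrals `V₁` and `V₂`: the directional derivatives
`∇V₁·X₄` and `∇V₂·X₄` vanish identically on the positive orthant. -/
theorem lyness4_X4_annihilates_V1_V2 (a : ℝ) (ha : 0 ≤ a)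
    (X : ℝ × ℝ × ℝ × ℝ → ℝ × ℝ × ℝ × ℝ)
    (hX : ∀ p : ℝ × ℝ × ℝ × ℝ,
      X p = (1 / (p.1 * p.2.1 * p.2.2.1 * p.2.2.2)) •
        ((p.1 * (p.1 + 1) * (1 + p.2.1 + p.2.2.1) * (1 + p.2.2.1 + p.2.2.2) *
            (a + p.1 + p.2.1 + p.2.2.1 - p.2.1 * p.2.2.2),
          p.2.1 * (p.2.1 + 1) * (1 + p.2.2.1 + p.2.2.2) *
            (a + p.1 + p.2.1 + p.2.2.1 + p.2.2.2 + p.1 * p.2.2.2) * (p.1 - p.2.2.1),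
          p.2.2.1 * (p.2.2.1 + 1) * (1 + p.1 + p.2.1) *
            (a + p.1 + p.2.1 + p.2.2.1 + p.2.2.2 + p.1 * p.2.2.2) * (p.2.1 - p.2.2.2),
          -(p.2.2.2 * (p.2.2.2 + 1) * (1 + p.1 + p.2.1) * (1 + p.2.1 + p.2.2.1) *
            (a + p.2.1 + p.2.2.1 + p.2.2.2 - p.1 * p.2.2.1)))))
    (V1 V2 : ℝ × ℝ × ℝ × ℝ → ℝ)
    (hV1 : ∀ p : ℝ × ℝ × ℝ × ℝ, V1 p =
      (a + p.1 + p.2.1 + p.2.2.1 + p.2.2.2) * (p.1 + 1) * (p.2.1 + 1) *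
        (p.2.2.1 + 1) * (p.2.2.2 + 1) / (p.1 * p.2.1 * p.2.2.1 * p.2.2.2))
    (hV2 : ∀ p : ℝ × ℝ × ℝ × ℝ, V2 p =
      (a + p.1 + p.2.1 + p.2.2.1 + p.2.2.2 + p.1 * p.2.2.2) * (1 + p.1 + p.2.1) *
        (1 + p.2.1 + p.2.2.1) * (1 + p.2.2.1 + p.2.2.2) /
        (p.1 * p.2.1 * p.2.2.1 * p.2.2.2))
    (p : ℝ × ℝ × ℝ × ℝ)
    (hp1 : 0 < p.1) (hp2 : 0 < p.2.1) (hp3 : 0 < p.2.2.1) (hp4 : 0 < p.2.2.2) :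
    fderiv ℝ V1 p (X p) = 0 ∧ fderiv ℝ V2 p (X p) = 0 := by
  have h1 : HasFDerivAt (fun q : ℝ × ℝ × ℝ × ℝ => q.1)
      (ContinuousLinearMap.fst ℝ ℝ (ℝ × ℝ × ℝ)) p := hasFDerivAt_fst
  have hs : HasFDerivAt (fun q : ℝ × ℝ × ℝ × ℝ => q.2)
      (ContinuousLinearMap.snd ℝ ℝ (ℝ × ℝ × ℝ)) p := hasFDerivAt_snd
  have hss : HasFDerivAt (fun q : ℝ × ℝ × ℝ × ℝ => q.2.2)
      ((ContinuousLinearMap.snd ℝ ℝ (ℝ × ℝ)).comp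
        (ContinuousLinearMap.snd ℝ ℝ (ℝ × ℝ × ℝ))) p :=
    (hasFDerivAt_snd (𝕜 := ℝ) (E := ℝ) (F := ℝ × ℝ)).comp p hs
  have h2 : HasFDerivAt (fun q : ℝ × ℝ × ℝ × ℝ => q.2.1)
      ((ContinuousLinearMap.fst ℝ ℝ (ℝ × ℝ)).comp
        (ContinuousLinearMap.snd ℝ ℝ (ℝ × ℝ × ℝ))) p :=
    (hasFDerivAt_fst (𝕜 := ℝ) (E := ℝ) (F := ℝ × ℝ)).comp p hs
  have h3 : HasFDerivAt (fun q : ℝ × ℝ × ℝ × ℝ => q.2.2.1) _ p :=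
    (hasFDerivAt_fst (𝕜 := ℝ) (E := ℝ) (F := ℝ)).comp p hss
  have h4 : HasFDerivAt (fun q : ℝ × ℝ × ℝ × ℝ => q.2.2.2) _ p :=
    (hasFDerivAt_snd (𝕜 := ℝ) (E := ℝ) (F := ℝ)).comp p hss
  have hD : HasFDerivAt (fun q : ℝ × ℝ × ℝ × ℝ => q.1 * q.2.1 * q.2.2.1 * q.2.2.2) _ p :=
    ((h1.mul h2).mul h3).mul h4
  have hDne : p.1 * p.2.1 * p.2.2.1 * p.2.2.2 ≠ 0 := by positivity
  have hI : HasFDerivAt (fun q : ℝ × ℝ × ℝ × ℝ => (q.1 * q.2.1 * q.2.2.1 * q.2.2.2)⁻¹) _ p :=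
    (hasFDerivAt_inv hDne).comp p hD
  have hN1 : HasFDerivAt (fun q : ℝ × ℝ × ℝ × ℝ =>
      (a + q.1 + q.2.1 + q.2.2.1 + q.2.2.2) * (q.1 + 1) * (q.2.1 + 1) *
        (q.2.2.1 + 1) * (q.2.2.2 + 1)) _ p :=
    (((((h1.const_add a).add h2).add h3).add h4).mul (h1.add_const 1)).mul (h2.add_const 1)
      |>.mul (h3.add_const 1) |>.mul (h4.add_const 1)
  have hN2 : HasFDerivAt (fun q : ℝ × ℝ × ℝ × ℝ =>
      (a + q.1 + q.2.1 + q.2.2.1 + q.2.2.2 + q.1 * q.2.2.2) * (1 + q.1 + q.2.1) *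
        (1 + q.2.1 + q.2.2.1) * (1 + q.2.2.1 + q.2.2.2)) _ p :=
    (((((h1.const_add a).add h2).add h3).add h4).add (h1.mul h4)).mul
        ((h1.const_add 1).add h2)
      |>.mul ((h2.const_add 1).add h3) |>.mul ((h3.const_add 1).add h4)
  have hW1 : HasFDerivAt (fun q : ℝ × ℝ × ℝ × ℝ =>
      ((a + q.1 + q.2.1 + q.2.2.1 + q.2.2.2) * (q.1 + 1) * (q.2.1 + 1) *
        (q.2.2.1 + 1) * (q.2.2.2 + 1)) * (q.1 * q.2.1 * q.2.2.1 * q.2.2.2)⁻¹) _ p :=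
    hN1.mul hI
  have hW2 : HasFDerivAt (fun q : ℝ × ℝ × ℝ × ℝ =>
      ((a + q.1 + q.2.1 + q.2.2.1 + q.2.2.2 + q.1 * q.2.2.2) * (1 + q.1 + q.2.1) *
        (1 + q.2.1 + q.2.2.1) * (1 + q.2.2.1 + q.2.2.2)) *
        (q.1 * q.2.1 * q.2.2.1 * q.2.2.2)⁻¹) _ p :=
    hN2.mul hI
  have e1 : V1 = fun q : ℝ × ℝ × ℝ × ℝ =>
      ((a + q.1 + q.2.1 + q.2.2.1 + q.2.2.2) * (q.1 + 1) * (q.2.1 + 1) *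
        (q.2.2.1 + 1) * (q.2.2.2 + 1)) * (q.1 * q.2.1 * q.2.2.1 * q.2.2.2)⁻¹ :=
    funext fun q => (hV1 q).trans (div_eq_mul_inv _ _)
  have e2 : V2 = fun q : ℝ × ℝ × ℝ × ℝ =>
      ((a + q.1 + q.2.1 + q.2.2.1 + q.2.2.2 + q.1 * q.2.2.2) * (1 + q.1 + q.2.1) *
        (1 + q.2.1 + q.2.2.1) * (1 + q.2.2.1 + q.2.2.2)) *
        (q.1 * q.2.1 * q.2.2.1 * q.2.2.2)⁻¹ :=
    funext fun q => (hV2 q).trans (div_eq_mul_inv _ _)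
  have hx := hp1.ne'
  have hy := hp2.ne'
  have hz := hp3.ne'
  have ht := hp4.ne'
  constructor
  · rw [e1, hW1.fderiv, hX p]
    simp only [ContinuousLinearMap.add_apply, ContinuousLinearMap.smul_apply,
      ContinuousLinearMap.comp_apply, ContinuousLinearMap.coe_fst',
      ContinuousLinearMap.coe_snd', ContinuousLinearMap.smulRight_apply,
      ContinuousLinearMap.one_apply, smul_eq_mul, Prod.smul_fst, Prod.smul_snd,
      Prod.fst_add, Prod.snd_add, Pi.mul_apply, Pi.add_apply,
      ContinuousLinearMap.toSpanSingleton_apply]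
    field_simp
    ring
  · rw [e2, hW2.fderiv, hX p]
    simp only [ContinuousLinearMap.add_apply, ContinuousLinearMap.smul_apply,
      ContinuousLinearMap.comp_apply, ContinuousLinearMap.coe_fst',
      ContinuousLinearMap.coe_snd', ContinuousLinearMap.smulRight_apply,
      ContinuousLinearMap.one_apply, smul_eq_mul, Prod.smul_fst, Prod.smul_snd,
      Prod.fst_add, Prod.snd_add, Pi.mul_apply, Pi.add_apply,
      ContinuousLinearMap.toSpanSingleton_apply]
    field_simp
    ring
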